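/- Let A be a 4×4 real matrix with Aᵀ η A = η (where η = diag(−1,1,1,1)) and A₀₀ ≥ 1, so that A maps the hyperboloid H³ to itself. Then there exists a Euclidean isometry B of ℝ³ (a rotation composed with a translation, i.e. B(v) = D + Rv with R an orthogonal 3×3 matrix and D ∈ ℝ³) such that for every x ∈ H³, writing Φ(x, Ax) = (a⃗, b⃗), one has b⃗ = B(a⃗). -/

import Mathlib

noncomputable section
open Matrix

/-- Minkowski inner product on ℝ⁴: ⟨x,y⟩ = −x₀y₀ + x₁y₁ + x₂y₂ + x₃y₃. -/
def mink (x y : Fin 4 → ℝ) : ℝ :=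
  -(x 0 * y 0) + x 1 * y 1 + x 2 * y 2 + x 3 * y 3

/-- The hyperboloid model of hyperbolic 3-space. -/
def Hyp : Set (Fin 4 → ℝ) := {x | 0 < x 0 ∧ mink x x = -1}

/-- Spatial part x⃗ of x = (x₀, x⃗). -/
def spat (x : Fin 4 → ℝ) : Fin 3 → ℝ := fun i => x i.succ

/-- The Pogorelov map Φ(x,y) = (2x⃗/(x₀+y₀), 2y⃗/(x₀+y₀)). -/
def pog (x y : Fin 4 → ℝ) : (Fin 3 → ℝ) × (Fin 3 → ℝ) :=
  ((2 / (x 0 + y 0)) • spat x, (2 / (x 0 + y 0)) • spat y)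

/-- The matrix η = diag(−1,1,1,1) of the Minkowski inner product. -/
def eta : Matrix (Fin 4) (Fin 4) ℝ := Matrix.diagonal ![(-1 : ℝ), 1, 1, 1]

set_option maxHeartbeats 1000000 in
/-- For a Lorentz transformation A preserving the upper hyperboloid, there is a
Euclidean isometry B(v) = D + Rv of ℝ³ (R orthogonal) such that for every
x ∈ H³, writing Φ(x, Ax) = (a⃗, b⃗), one has b⃗ = D + R a⃗. -/
theorem pogorelov_isometry (A : Matrix (Fin 4) (Fin 4) ℝ)
    (hA : Aᵀ * eta * A = eta) (hA00 : 1 ≤ A 0 0) :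
    ∃ (R : Matrix (Fin 3) (Fin 3) ℝ) (D : Fin 3 → ℝ),
      R * Rᵀ = 1 ∧
      ∀ x ∈ Hyp, (pog x (A.mulVec x)).2 = D + R.mulVec (pog x (A.mulVec x)).1 := by
  have hc : (1:ℝ) + A 0 0 ≠ 0 := by linarith
  have hη2 : eta * eta = 1 := by
    ext i j
    fin_cases i <;> fin_cases j <;>
      simp [eta, Matrix.mul_apply, Fin.sum_univ_four, Matrix.one_apply]
  have hleft : (eta * Aᵀ * eta) * A = 1 := by
    calc (eta * Aᵀ * eta) * A = eta * (Aᵀ * eta * A) := by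
          simp only [mul_assoc]
      _ = 1 := by rw [hA, hη2]
  have hright : A * (eta * Aᵀ * eta) = 1 := mul_eq_one_comm.mp hleft
  have hA' : A * eta * Aᵀ = eta := by
    calc A * eta * Aᵀ = A * eta * Aᵀ * (eta * eta) := by rw [hη2, mul_one]
      _ = (A * (eta * Aᵀ * eta)) * eta := by simp only [mul_assoc]
      _ = eta := by rw [hright, one_mul]
  have key : ∀ i k : Fin 4,
      -(A i 0 * A k 0) + A i 1 * A k 1 + A i 2 * A k 2 + A i 3 * A k 3 = eta i k := by
    intro i k
    have := congrFun (congrFun hA' i) k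
    simp [Matrix.mul_apply, eta, Fin.sum_univ_four, Matrix.diagonal] at this ⊢
    linarith [this]
  have k00 : -(A 0 0 * A 0 0) + A 0 1 * A 0 1 + A 0 2 * A 0 2 + A 0 3 * A 0 3 = -1 := by
    simpa [eta] using key 0 0
  have k10 : -(A 1 0 * A 0 0) + A 1 1 * A 0 1 + A 1 2 * A 0 2 + A 1 3 * A 0 3 = 0 := by
    simpa [eta] using key 1 0
  have k20 : -(A 2 0 * A 0 0) + A 2 1 * A 0 1 + A 2 2 * A 0 2 + A 2 3 * A 0 3 = 0 := by
    simpa [eta] using key 2 0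
  have k30 : -(A 3 0 * A 0 0) + A 3 1 * A 0 1 + A 3 2 * A 0 2 + A 3 3 * A 0 3 = 0 := by
    simpa [eta] using key 3 0
  have k11 : -(A 1 0 * A 1 0) + A 1 1 * A 1 1 + A 1 2 * A 1 2 + A 1 3 * A 1 3 = 1 := by
    simpa [eta] using key 1 1
  have k22 : -(A 2 0 * A 2 0) + A 2 1 * A 2 1 + A 2 2 * A 2 2 + A 2 3 * A 2 3 = 1 := by
    simpa [eta] using key 2 2
  have k33 : -(A 3 0 * A 3 0) + A 3 1 * A 3 1 + A 3 2 * A 3 2 + A 3 3 * A 3 3 = 1 := by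
    simpa [eta] using key 3 3
  have k12 : -(A 1 0 * A 2 0) + A 1 1 * A 2 1 + A 1 2 * A 2 2 + A 1 3 * A 2 3 = 0 := by
    simpa [eta] using key 1 2
  have k13 : -(A 1 0 * A 3 0) + A 1 1 * A 3 1 + A 1 2 * A 3 2 + A 1 3 * A 3 3 = 0 := by
    simpa [eta] using key 1 3
  have k23 : -(A 2 0 * A 3 0) + A 2 1 * A 3 1 + A 2 2 * A 3 2 + A 2 3 * A 3 3 = 0 := by
    simpa [eta] using key 2 3
  set c : ℝ := 1 + A 0 0 with hcdef
  set r : Fin 4 → Fin 4 → ℝ := fun i j => A i j - A i 0 * A 0 j / c with hrdef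
  refine ⟨!![r 1 1, r 1 2, r 1 3; r 2 1, r 2 2, r 2 3; r 3 1, r 3 2, r 3 3],
          ![2 * A 1 0 / c, 2 * A 2 0 / c, 2 * A 3 0 / c], ?_, ?_⟩
  · ext i k
    rw [Matrix.mul_apply]
    simp only [Matrix.transpose_apply, Fin.sum_univ_three]
    fin_cases i <;> fin_cases k <;>
      simp [hrdef, Matrix.one_apply] <;>
      field_simp
    · linear_combination c^2*k11 - 2*c*(A 1 0)*k10 + (A 1 0)^2*k00
    · linear_combination c^2*k12 - c*(A 2 0)*k10 - c*(A 1 0)*k20 + (A 1 0)*(A 2 0)*k00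
    · linear_combination c^2*k13 - c*(A 3 0)*k10 - c*(A 1 0)*k30 + (A 1 0)*(A 3 0)*k00
    · linear_combination c^2*k12 - c*(A 2 0)*k10 - c*(A 1 0)*k20 + (A 1 0)*(A 2 0)*k00
    · linear_combination c^2*k22 - 2*c*(A 2 0)*k20 + (A 2 0)^2*k00
    · linear_combination c^2*k23 - c*(A 3 0)*k20 - c*(A 2 0)*k30 + (A 2 0)*(A 3 0)*k00
    · linear_combination c^2*k13 - c*(A 3 0)*k10 - c*(A 1 0)*k30 + (A 1 0)*(A 3 0)*k00
    · linear_combination c^2*k23 - c*(A 3 0)*k20 - c*(A 2 0)*k30 + (A 2 0)*(A 3 0)*k00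
    · linear_combination c^2*k33 - 2*c*(A 3 0)*k30 + (A 3 0)^2*k00
  · intro x hx
    obtain ⟨hx0, hxm⟩ := hx
    have hAx0 : 0 < (A.mulVec x) 0 := by
      simp only [Matrix.mulVec, dotProduct, Fin.sum_univ_four]
      simp only [mink] at hxm
      nlinarith [sq_nonneg (A 0 1 * x 2 - A 0 2 * x 1),
        sq_nonneg (A 0 1 * x 3 - A 0 3 * x 1), sq_nonneg (A 0 2 * x 3 - A 0 3 * x 2),
        sq_nonneg (A 0 0 * x 0 - (A 0 1 * x 1 + A 0 2 * x 2 + A 0 3 * x 3)),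
        mul_pos (lt_of_lt_of_le one_pos hA00) hx0, sq_nonneg (A 0 0 - x 0), hx0]
    have hs : x 0 + (A.mulVec x) 0 ≠ 0 := by positivity
    have hAx : ∀ i : Fin 4, (A.mulVec x) i
        = A i 0 * x 0 + A i 1 * x 1 + A i 2 * x 2 + A i 3 * x 3 := by
      intro i; simp [Matrix.mulVec, dotProduct, Fin.sum_univ_four]
    rw [hAx 0] at hs
    have h1 : (x 0 + x 0 * A 0 0 + x 1 * A 0 1 + x 2 * A 0 2 + x 3 * A 0 3) *
        (x 0 + x 0 * A 0 0 + x 1 * A 0 1 + x 2 * A 0 2 + x 3 * A 0 3)⁻¹ = 1 :=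
      mul_inv_cancel₀ (by contrapose! hs; linarith)
    have h2 : (1 + A 0 0) * (1 + A 0 0)⁻¹ = 1 := mul_inv_cancel₀ hc
    funext i
    fin_cases i <;>
      (simp [pog, spat, Matrix.mulVec, dotProduct, Fin.sum_univ_three, Fin.sum_univ_four,
          hrdef, show (Fin.succ (2:Fin 3) : Fin 4) = 3 from rfl]
       rw [hcdef])
    · linear_combination A 1 0 * (2 * (1 + A 0 0)⁻¹ * h1 - 2 * x 0 *
        (x 0 + x 0 * A 0 0 + x 1 * A 0 1 + x 2 * A 0 2 + x 3 * A 0 3)⁻¹ * h2)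
    · linear_combination A 2 0 * (2 * (1 + A 0 0)⁻¹ * h1 - 2 * x 0 *
        (x 0 + x 0 * A 0 0 + x 1 * A 0 1 + x 2 * A 0 2 + x 3 * A 0 3)⁻¹ * h2)
    · linear_combination A 3 0 * (2 * (1 + A 0 0)⁻¹ * h1 - 2 * x 0 *
        (x 0 + x 0 * A 0 0 + x 1 * A 0 1 + x 2 * A 0 2 + x 3 * A 0 3)⁻¹ * h2)
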